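/- Let 0 < q < 1 and θ > 0, and let X_n ∼ KB(n, θ q^{−n}, q). Then Y_n = n − X_n satisfies exactly, for every 0 ≤ x ≤ n, P(Y_n = x) = [n choose x]_q · q^{x(x−1)/2} · (q/θ)^x / (−q/θ; q)_n; consequently, for every fixed integer x ≥ 0, P(n − X_n = x) → q^{x(x−1)/2} (q/θ)^x/(q;q)_x · e_q(−q/θ) as n → ∞, i.e. n − X_n converges in distribution to the Heine distribution H(q/θ). -/

import Mathlib

open Filter Finset

/-- The q-shifted factorial `(z;q)_n = ∏_{i=0}^{n-1} (1 - z q^i)`. -/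
noncomputable def qPoch (q z : ℝ) (n : ℕ) : ℝ := ∏ i ∈ range n, (1 - z * q ^ i)

/-- The q-binomial coefficient `[n choose k]_q = (q;q)_n / ((q;q)_k (q;q)_{n-k})`. -/
noncomputable def qBinom (q : ℝ) (n k : ℕ) : ℝ := qPoch q q n / (qPoch q q k * qPoch q q (n - k))

/-- The q-exponential `e_q(z) = 1/(z;q)_∞`. -/
noncomputable def qExp (q z : ℝ) : ℝ := (∏' i : ℕ, (1 - z * q ^ i))⁻¹

/-- The probability `P(X = x)` for `X ∼ KB(n, θ, q)`, `0 ≤ x ≤ n`. -/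
noncomputable def kbProbN (q θ : ℝ) (n x : ℕ) : ℝ :=
  qBinom q n x * θ ^ x * q ^ (x * (x - 1) / 2) / ∏ i ∈ range n, (1 + θ * q ^ i)

private lemma two_dvd_pred (k : ℕ) : 2 ∣ k * (k - 1) := by
  rcases k with _ | s
  · simp
  · simpa [Nat.mul_comm] using (Nat.even_mul_succ_self s).two_dvd

private lemma exp_id (x m : ℕ) :
    m * (m - 1) / 2 + (x + m) * ((x + m) + 1) / 2
      = x * (x - 1) / 2 + x + (x + m) * m := by
  have key : m * (m - 1) + (x + m) * ((x + m) + 1)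
      = x * (x - 1) + 2 * x + 2 * ((x + m) * m) := by
    rcases m with _ | t <;> rcases x with _ | s <;>
      simp [Nat.succ_sub_one] <;> ring
  have h1 := two_dvd_pred m
  have h2 : 2 ∣ (x + m) * ((x + m) + 1) := (Nat.even_mul_succ_self (x + m)).two_dvd
  have h3 := two_dvd_pred x
  generalize m * (m - 1) = P1 at key h1
  generalize (x + m) * ((x + m) + 1) = P2 at key h2
  generalize x * (x - 1) = P3 at key h3
  generalize (x + m) * m = Q at key
  omega

private lemma denom_eq (q θ : ℝ) (hq : 0 < q) (hθ : θ ≠ 0) (n : ℕ) :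
    ∏ i ∈ range n, (1 + θ * q ^ (-(n : ℤ)) * q ^ i)
      = θ ^ n / q ^ (n * (n + 1) / 2) * ∏ i ∈ range n, (1 + q / θ * q ^ i) := by
  have hq' : (q : ℝ) ≠ 0 := ne_of_gt hq
  have hfac : ∀ i ∈ range n,
      (1 + θ * q ^ (-(n : ℤ)) * q ^ i)
        = (θ * q ^ i * (q ^ n)⁻¹) * (1 + q / θ * q ^ (n - 1 - i)) := by
    intro i hi
    have hi' : i < n := mem_range.mp hi
    have hpow : q ^ i * (q * q ^ (n - 1 - i)) = q ^ n := by
      rw [← pow_succ', ← pow_add]; congr 1; omega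
    rw [zpow_neg, zpow_natCast]
    field_simp
    linear_combination (-1 : ℝ) * hpow
  rw [prod_congr rfl hfac, prod_mul_distrib, prod_range_reflect (fun i => 1 + q / θ * q ^ i) n]
  congr 1
  rw [prod_mul_distrib, prod_mul_distrib, prod_const, prod_const, prod_pow_eq_pow_sum]
  have hnn : n * (n - 1) / 2 + n * (n + 1) / 2 = n * n := by
    have key : n * (n - 1) + n * (n + 1) = 2 * (n * n) := by
      rcases n with _ | t <;> simp [Nat.succ_sub_one] <;> ring
    have h1 : 2 ∣ n * (n - 1) := two_dvd_pred n
    have h2 : 2 ∣ n * (n + 1) := (Nat.even_mul_succ_self n).two_dvd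
    generalize n * (n - 1) = P1 at key h1
    generalize n * (n + 1) = P2 at key h2
    generalize n * n = P3 at key
    omega
  have hq2 : (q : ℝ) ^ (n * n) = q ^ (n * (n - 1) / 2) * q ^ (n * (n + 1) / 2) := by
    rw [← pow_add, hnn]
  rw [Finset.sum_range_id, inv_pow, ← pow_mul, card_range, hq2]
  field_simp

private lemma scalar_eq (q θ : ℝ) (hq : 0 < q) (hθ : θ ≠ 0) (x m n : ℕ) (h : n = x + m) :
    (θ * q ^ (-(n : ℤ))) ^ m * q ^ (m * (m - 1) / 2)
      = (θ ^ n / q ^ (n * (n + 1) / 2)) * (q ^ (x * (x - 1) / 2) * (q / θ) ^ x) := by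
  subst h
  have hq' : (q : ℝ) ≠ 0 := ne_of_gt hq
  rw [zpow_neg, zpow_natCast, mul_pow, inv_pow, ← pow_mul, div_pow]
  have key : (q : ℝ) ^ (m * (m - 1) / 2) * q ^ ((x + m) * ((x + m) + 1) / 2)
      = q ^ (x * (x - 1) / 2) * q ^ x * q ^ ((x + m) * m) := by
    rw [← pow_add, ← pow_add, ← pow_add, exp_id]
  field_simp
  linear_combination (θ ^ (x + m)) * key

private lemma part1 (q θ : ℝ) (hq0 : 0 < q) (hθ : 0 < θ) (n x : ℕ) (hx : x ≤ n) :
    kbProbN q (θ * q ^ (-(n : ℤ))) n (n - x) =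
      qBinom q n x * q ^ (x * (x - 1) / 2) * (q / θ) ^ x /
        ∏ i ∈ range n, (1 + q / θ * q ^ i) := by
  have hθ' : θ ≠ 0 := ne_of_gt hθ
  have hq' : q ≠ 0 := ne_of_gt hq0
  set m := n - x with hm
  have hnm : n = x + m := by omega
  have hsc := scalar_eq q θ hq0 hθ' x m n hnm
  have hE : (θ : ℝ) ^ n / q ^ (n * (n + 1) / 2) ≠ 0 := by positivity
  have cancel : ∀ a s e d : ℝ, e ≠ 0 → a * (e * s) / (e * d) = a * s / d := by
    intro a s e d he
    rw [mul_div_assoc, mul_div_mul_left _ _ he, mul_div_assoc]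
  unfold kbProbN qBinom
  rw [show n - m = x by omega, denom_eq q θ hq0 hθ' n]
  rw [show qPoch q q n / (qPoch q q m * qPoch q q x) * (θ * q ^ (-(n : ℤ))) ^ m *
        q ^ (m * (m - 1) / 2) /
        (θ ^ n / q ^ (n * (n + 1) / 2) * ∏ i ∈ range n, (1 + q / θ * q ^ i))
      = qPoch q q n / (qPoch q q m * qPoch q q x) *
        ((θ * q ^ (-(n : ℤ))) ^ m * q ^ (m * (m - 1) / 2)) /
        (θ ^ n / q ^ (n * (n + 1) / 2) * ∏ i ∈ range n, (1 + q / θ * q ^ i)) by ring,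
    hsc, cancel _ _ _ _ hE]
  ring

theorem kemp_exponential_param_to_heine (q θ : ℝ) (hq0 : 0 < q) (hq1 : q < 1) (hθ : 0 < θ) :
    (∀ n x : ℕ, x ≤ n →
        kbProbN q (θ * q ^ (-(n : ℤ))) n (n - x) =
          qBinom q n x * q ^ (x * (x - 1) / 2) * (q / θ) ^ x /
            ∏ i ∈ range n, (1 + q / θ * q ^ i)) ∧
      ∀ x : ℕ,
        Tendsto (fun n : ℕ => kbProbN q (θ * q ^ (-(n : ℤ))) n (n - x)) atTop
          (nhds (q ^ (x * (x - 1) / 2) * (q / θ) ^ x / qPoch q q x * qExp q (-(q / θ)))) := by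
  have hq' : q ≠ 0 := ne_of_gt hq0
  have hθ' : θ ≠ 0 := ne_of_gt hθ
  refine ⟨fun n x hx => part1 q θ hq0 hθ n x hx, fun x => ?_⟩
  -- summability of logs
  have hsummable : Summable (fun i : ℕ => Real.log (1 + q / θ * q ^ i)) := by
    apply Summable.of_nonneg_of_le
      (fun i => Real.log_nonneg (le_add_of_nonneg_right (by positivity)))
      (fun i => (Real.log_le_sub_one_of_pos (by positivity)).trans (by rw [add_sub_cancel_left]))
    exact (summable_geometric_of_lt_one hq0.le hq1).mul_left _
  have hprod : HasProd (fun i : ℕ => 1 + q / θ * q ^ i) (∏' i, (1 + q / θ * q ^ i)) :=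
    (Real.multipliable_of_summable_log (fun i => by positivity) hsummable).hasProd
  set PP : ℝ := ∏' i : ℕ, (1 + q / θ * q ^ i) with hPPdef
  have hDlim : Tendsto (fun n : ℕ => ∏ i ∈ range n, (1 + q / θ * q ^ i)) atTop (nhds PP) :=
    hprod.tendsto_prod_nat
  have hPP1 : (1 : ℝ) ≤ PP := by
    refine ge_of_tendsto' hDlim fun n => ?_
    have h := Finset.prod_le_prod (s := range n) (f := fun _ => (1 : ℝ))
      (g := fun i => 1 + q / θ * q ^ i) (fun i _ => by norm_num)
      (fun i _ => by nlinarith [pow_pos hq0 i, div_pos hq0 hθ])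
    simpa using h
  have hPP : PP ≠ 0 := by linarith
  have hqpoch_ne : ∀ k : ℕ, qPoch q q k ≠ 0 := by
    intro k
    refine ne_of_gt (prod_pos fun i _ => ?_)
    have h1 : q ^ i ≤ 1 := pow_le_one₀ hq0.le hq1.le
    nlinarith [pow_pos hq0 i]
  -- limit of qBinom
  have hBlim : Tendsto (fun n : ℕ => qBinom q n x) atTop (nhds (qPoch q q x)⁻¹) := by
    have hg : Tendsto (fun n : ℕ => ∏ j ∈ range x, (1 - q * (q ^ (n - x) * q ^ j)))
        atTop (nhds 1) := by
      have h1 : Tendsto (fun n : ℕ => q ^ (n - x)) atTop (nhds 0) :=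
        (tendsto_pow_atTop_nhds_zero_of_lt_one hq0.le hq1).comp (tendsto_sub_atTop_nat x)
      have := tendsto_finset_prod (range x)
        (f := fun j (n : ℕ) => (1 - q * (q ^ (n - x) * q ^ j)))
        (fun j _ => by simpa using (((h1.mul_const (q ^ j)).const_mul q).const_sub 1))
      simpa using this
    have heq : ∀ᶠ n : ℕ in atTop, (∏ j ∈ range x, (1 - q * (q ^ (n - x) * q ^ j))) /
        qPoch q q x = qBinom q n x := by
      filter_upwards [eventually_ge_atTop x] with n hn
      unfold qBinom qPoch
      rw [show n = (n - x) + x by omega, Finset.prod_range_add]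
      rw [show (n - x) + x - x = n - x by omega]
      have h2 : ∀ j, q * q ^ ((n - x) + j) = q * (q ^ (n - x) * q ^ j) := by
        intro j; rw [pow_add]
      simp only [h2]
      have hP1 : (∏ i ∈ range (n - x), (1 - q * q ^ i)) ≠ 0 := by
        simpa [qPoch] using hqpoch_ne (n - x)
      have hPx : (∏ i ∈ range x, (1 - q * q ^ i)) ≠ 0 := by
        simpa [qPoch] using hqpoch_ne x
      field_simp
    have := hg.div_const (qPoch q q x)
    rw [one_div] at this
    exact this.congr' heq
  have final := ((hBlim.mul_const (q ^ (x * (x - 1) / 2))).mul_const ((q / θ) ^ x)).div hDlim hPP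
  have hval : (qPoch q q x)⁻¹ * q ^ (x * (x - 1) / 2) * (q / θ) ^ x / PP
      = q ^ (x * (x - 1) / 2) * (q / θ) ^ x / qPoch q q x * qExp q (-(q / θ)) := by
    have : qExp q (-(q / θ)) = PP⁻¹ := by
      unfold qExp
      rw [hPPdef]
      congr 1
      apply tprod_congr
      intro i
      ring
    rw [this]
    field_simp
  rw [hval] at final
  refine final.congr' ?_
  filter_upwards [eventually_ge_atTop x] with n hn
  exact (part1 q θ hq0 hθ n x hn).symm
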